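/- arXiv:2412.03066 — 2 statements merged into one kernel-verified Lean document; each statement's English description precedes it below -/
import Mathlib

section
/- If G is a connected graph and X ⊆ V(G) is a dual mutual-visibility set (or a total mutual-visibility set) of G, then the induced subgraph G − X is an isometric subgraph of G. -/
open SimpleGraph

variable {V : Type*}

/-- Vertices `u` and `v` are `X`-visible in `G`: some shortest `u,v`-walk has
no internal vertex in `X`. -/
def XVisible (G : SimpleGraph V) (X : Set V) (u v : V) : Prop :=
  ∃ p : G.Walk u v, p.length = G.dist u v ∧
    ∀ w ∈ p.support, w ≠ u → w ≠ v → w ∉ X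

/-- `X` is a mutual-visibility set of `G`. -/
def MutualVis (G : SimpleGraph V) (X : Set V) : Prop :=
  ∀ ⦃u⦄, u ∈ X → ∀ ⦃v⦄, v ∈ X → XVisible G X u v

/-- `X` is a total mutual-visibility set of `G`. -/
def TotalVis (G : SimpleGraph V) (X : Set V) : Prop :=
  ∀ u v : V, XVisible G X u v

/-- `X` is a dual mutual-visibility set of `G`. -/
def DualVis (G : SimpleGraph V) (X : Set V) : Prop :=
  MutualVis G X ∧ ∀ ⦃u⦄, u ∉ X → ∀ ⦃v⦄, v ∉ X → XVisible G X u v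

/-- `X` is an outer mutual-visibility set of `G`. -/
def OuterVis (G : SimpleGraph V) (X : Set V) : Prop :=
  MutualVis G X ∧ ∀ ⦃u⦄, u ∈ X → ∀ ⦃v⦄, v ∉ X → XVisible G X u v

/-- `S` induces a convex subgraph of `G`. -/
def IsConvexSet (G : SimpleGraph V) (S : Set V) : Prop :=
  ∀ u ∈ S, ∀ v ∈ S, ∀ p : G.Walk u v, p.length = G.dist u v →
    ∀ w ∈ p.support, w ∈ S

/-- The cycle graph on `ZMod n`. -/
def cyc (n : ℕ) : SimpleGraph (ZMod n) :=
  SimpleGraph.fromRel (fun u v => u - v = 1)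

/-- Lift a walk whose support lies in `S` to the induced subgraph. -/
lemma lift_walk {G : SimpleGraph V} {S : Set V} :
    ∀ {u v : V} (p : G.Walk u v) (_ : ∀ w ∈ p.support, w ∈ S)
      (hu : u ∈ S) (hv : v ∈ S),
      ∃ q : (G.induce S).Walk ⟨u, hu⟩ ⟨v, hv⟩, q.length = p.length := by
  intro u v p
  induction p with
  | nil => intro _ hu hv; exact ⟨.nil, rfl⟩
  | @cons a b c h p ih =>
    intro hsup hu hv
    have hb : b ∈ S := hsup b (by simp)
    obtain ⟨q, hq⟩ := ih (fun w hw => hsup w (by simp [hw])) hb hv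
    exact ⟨.cons (show (G.induce S).Adj ⟨a, hu⟩ ⟨b, hb⟩ from h) q, by simp [hq]⟩

theorem stmt_8 (G : SimpleGraph V) (hG : G.Connected) (X : Set V)
    (hX : DualVis G X ∨ TotalVis G X) :
    ∀ u v : (Xᶜ : Set V),
      (G.induce (Xᶜ : Set V)).dist u v = G.dist (u : V) (v : V) := by
  rintro ⟨u, hu⟩ ⟨v, hv⟩
  have hvis : XVisible G X u v := by
    rcases hX with ⟨_, h⟩ | h
    · exact h hu hv
    · exact h u v
  obtain ⟨p, hplen, hpsup⟩ := hvis
  have hsup : ∀ w ∈ p.support, w ∈ (Xᶜ : Set V) := by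
    intro w hw
    by_cases h1 : w = u
    · subst h1; exact hu
    by_cases h2 : w = v
    · subst h2; exact hv
    exact hpsup w hw h1 h2
  obtain ⟨q, hq⟩ := lift_walk p hsup hu hv
  apply le_antisymm
  · calc (G.induce (Xᶜ : Set V)).dist ⟨u, hu⟩ ⟨v, hv⟩ ≤ q.length := dist_le q
      _ = G.dist u v := by rw [hq, hplen]
  · obtain ⟨r, hr⟩ := Reachable.exists_walk_length_eq_dist ⟨q⟩
    have := dist_le (r.map (SimpleGraph.Embedding.comap
      (Function.Embedding.subtype (· ∈ (Xᶜ : Set V))) G).toHom)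
    rw [Walk.length_map, hr] at this
    exact this
end

section
/- A subset X of the vertices of the Petersen graph P is an outer mutual-visibility set of P if and only if X is an independent set of P. -/
open SimpleGraph

variable {V : Type*}

/-- The Petersen graph as the Kneser graph K(5,2). -/
def petersen : SimpleGraph {s : Finset (Fin 5) // s.card = 2} where
  Adj s t := Disjoint s.val t.val
  symm := ⟨fun _ _ h => h.symm⟩
  loopless := ⟨fun s h => by
    have h0 : s.val = ∅ := disjoint_self.mp h
    have h2 := s.2
    rw [h0] at h2
    simp at h2⟩

instance : DecidableRel petersen.Adj := fun s t =>
  inferInstanceAs (Decidable (Disjoint s.val t.val))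

private lemma xvis_refl (G : SimpleGraph V) (X : Set V) (u : V) : XVisible G X u u := by
  refine ⟨Walk.nil, by simp [SimpleGraph.dist_self], ?_⟩
  intro w hw hwu _
  simp at hw
  exact absurd hw hwu

private lemma xvis_adj {G : SimpleGraph V} {X : Set V} {u v : V} (h : G.Adj u v) :
    XVisible G X u v := by
  refine ⟨Walk.cons h Walk.nil, ?_, ?_⟩
  · rw [(SimpleGraph.dist_eq_one_iff_adj (G := G)).mpr h]; simp
  · intro w hw hwu hwv
    simp [Walk.support] at hw
    rcases hw with h1 | h1 <;> [exact absurd h1 hwu; exact absurd h1 hwv]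

private lemma dist_two {G : SimpleGraph V} {u v w : V} (h1 : G.Adj u w) (h2 : G.Adj w v)
    (hne : u ≠ v) (hna : ¬ G.Adj u v) : G.dist u v = 2 := by
  have hle : G.dist u v ≤ 2 := by
    have := G.dist_le (Walk.cons h1 (Walk.cons h2 Walk.nil))
    simpa using this
  have h0 : G.dist u v ≠ 0 := by
    rw [ne_eq, SimpleGraph.dist_eq_zero_iff_eq_or_not_reachable]
    push_neg
    exact ⟨hne, ⟨Walk.cons h1 (Walk.cons h2 Walk.nil)⟩⟩
  have h1' : G.dist u v ≠ 1 := fun hc => hna ((SimpleGraph.dist_eq_one_iff_adj (G := G)).mp hc)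
  omega

private lemma xvis_two {G : SimpleGraph V} {X : Set V} {u v w : V} (h1 : G.Adj u w)
    (h2 : G.Adj w v) (hne : u ≠ v) (hna : ¬ G.Adj u v) (hw : w ∉ X) :
    XVisible G X u v := by
  refine ⟨Walk.cons h1 (Walk.cons h2 Walk.nil), ?_, ?_⟩
  · simp [dist_two h1 h2 hne hna]
  · intro x hx hxu hxv
    simp [Walk.support] at hx
    rcases hx with h | h | h
    · exact absurd h hxu
    · exact h ▸ hw
    · exact absurd h hxv

private lemma walk_len2 {G : SimpleGraph V} {u v : V} (p : G.Walk u v) (hl : p.length = 2) :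
    ∃ w, ∃ (h1 : G.Adj u w) (h2 : G.Adj w v),
      p = Walk.cons h1 (Walk.cons h2 Walk.nil) := by
  cases p with
  | nil => simp at hl
  | cons h q =>
    cases q with
    | nil => simp at hl
    | cons h' q' =>
      cases q' with
      | nil => exact ⟨_, h, h', rfl⟩
      | cons h'' q'' => simp [Walk.length_cons] at hl

private lemma petF1 : ∀ u v : {s : Finset (Fin 5) // s.card = 2}, u ≠ v →
    ¬ petersen.Adj u v → ∃ w, petersen.Adj u w ∧ petersen.Adj w v := by decide

private lemma petF2 : ∀ u v w w' : {s : Finset (Fin 5) // s.card = 2}, u ≠ v →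
    petersen.Adj u w → petersen.Adj w v → petersen.Adj u w' → petersen.Adj w' v →
    w = w' := by decide

private lemma petF3 : ∀ a b c : {s : Finset (Fin 5) // s.card = 2},
    petersen.Adj a b → petersen.Adj b c → ¬ petersen.Adj a c := by decide

private lemma petF4 : ∃ u v : {s : Finset (Fin 5) // s.card = 2},
    u ≠ v ∧ ¬ petersen.Adj u v := by decide

theorem stmt_11 (X : Set {s : Finset (Fin 5) // s.card = 2}) :
    OuterVis petersen X ↔ X.Pairwise (fun u v => ¬ petersen.Adj u v) := by
  constructor
  · intro h
    intro a ha b hb hne hadj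
    -- key: if a,b ∈ X are adjacent, all neighbors of b are in X
    have key : ∀ a b, a ∈ X → b ∈ X → petersen.Adj a b →
        ∀ v, petersen.Adj b v → v ∈ X := by
      intro a b ha hb hab v hbv
      by_contra hv
      have hav : ¬ petersen.Adj a v := petF3 a b v hab hbv
      have hane : a ≠ v := fun he => hv (he ▸ ha)
      obtain ⟨p, hplen, hpint⟩ := h.2 ha hv
      rw [dist_two hab hbv hane hav] at hplen
      obtain ⟨w, h1, h2, rfl⟩ := walk_len2 p hplen
      have hwX : w ∉ X := hpint w (by simp [Walk.support]) h1.ne' h2.ne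
      have : w = b := petF2 a v w b hane h1 h2 hab hbv
      exact hwX (this ▸ hb)
    have hall : ∀ v, v ∈ X := by
      intro v
      by_cases hvb : v = b
      · exact hvb ▸ hb
      by_cases hadjv : petersen.Adj b v
      · exact key a b ha hb hadj v hadjv
      · obtain ⟨w, hbw, hwv⟩ := petF1 b v (Ne.symm hvb) hadjv
        have hw : w ∈ X := key a b ha hb hadj w hbw
        exact key b w hb hw hbw v hwv
    obtain ⟨u0, v0, hne0, hnadj0⟩ := petF4
    obtain ⟨w0, hw1, hw2⟩ := petF1 u0 v0 hne0 hnadj0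
    obtain ⟨p, hplen, hpint⟩ := h.1 (hall u0) (hall v0)
    rw [dist_two hw1 hw2 hne0 hnadj0] at hplen
    obtain ⟨w, h1, h2, rfl⟩ := walk_len2 p hplen
    exact hpint w (by simp [Walk.support]) h1.ne' h2.ne (hall w)
  · intro hind
    have main : ∀ u v, u ∈ X → XVisible petersen X u v := by
      intro u v hu
      by_cases heq : u = v
      · exact heq ▸ xvis_refl petersen X u
      by_cases hadj : petersen.Adj u v
      · exact xvis_adj hadj
      obtain ⟨w, h1, h2⟩ := petF1 u v heq hadj
      have hw : w ∉ X := fun hwX => hind hu hwX h1.ne h1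
      exact xvis_two h1 h2 heq hadj hw
    exact ⟨fun u hu v _ => main u v hu, fun u hu v _ => main u v hu⟩
end
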